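/- Let G be a cancellative 3-uniform hypergraph with at least one edge. Then λ^(1)(G) = 1/9. -/

import Mathlib

open Finset

/-- A 3-uniform hypergraph on vertex set `Fin n`, given by its edge set:
every edge is a 3-element subset. -/
def IsThreeGraph {n : ℕ} (E : Finset (Finset (Fin n))) : Prop :=
  ∀ e ∈ E, e.card = 3

/-- `G` is cancellative: there are no three distinct edges `A, B, C` with `B △ C ⊆ A`. -/
def Cancellative {n : ℕ} (E : Finset (Finset (Fin n))) : Prop :=
  ∀ A ∈ E, ∀ B ∈ E, ∀ C ∈ E, A ≠ B → A ≠ C → B ≠ C → ¬ (symmDiff B C ⊆ A)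

/-- The `p`-norm of a vector `x ∈ ℝ^n`. -/
noncomputable def pNorm {n : ℕ} (p : ℝ) (x : Fin n → ℝ) : ℝ :=
  (∑ i, |x i| ^ p) ^ (1 / p)

/-- The polynomial form of a 3-graph. -/
noncomputable def polyForm {n : ℕ} (E : Finset (Finset (Fin n))) (x : Fin n → ℝ) : ℝ :=
  3 * ∑ e ∈ E, ∏ i ∈ e, x i

/-- The `p`-spectral radius of a 3-graph: the maximum of the polynomial form over the
unit sphere of the `p`-norm. -/
noncomputable def specRad {n : ℕ} (p : ℝ) (E : Finset (Finset (Fin n))) : ℝ :=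
  sSup {r : ℝ | ∃ x : Fin n → ℝ, pNorm p x = 1 ∧ polyForm E x = r}

/-- The part (among the three parts of sizes ⌊n/3⌋, ⌊(n+1)/3⌋, ⌊(n+2)/3⌋) containing vertex `i`. -/
def part3 (n : ℕ) (i : Fin n) : Fin 3 :=
  if (i : ℕ) < n / 3 then 0 else if (i : ℕ) < n / 3 + (n + 1) / 3 then 1 else 2

/-- The complete 3-partite 3-graph `T_3(n)` with part sizes ⌊n/3⌋, ⌊(n+1)/3⌋, ⌊(n+2)/3⌋:
edges are the triples having exactly one vertex in each part. -/
def T3 (n : ℕ) : Finset (Finset (Fin n)) :=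
  Finset.univ.filter fun e => ∀ k : Fin 3, (e.filter fun i => part3 n i = k).card = 1

/-- `t_3(n)`, the number of edges of `T_3(n)`. -/
def t3 (n : ℕ) : ℕ := (n / 3) * ((n + 1) / 3) * ((n + 2) / 3)

/-- Two 3-graphs on `Fin n` are isomorphic. -/
def IsoTo {n : ℕ} (E₁ E₂ : Finset (Finset (Fin n))) : Prop :=
  ∃ σ : Fin n ≃ Fin n, ∀ e : Finset (Fin n), e ∈ E₁ ↔ e.map σ.toEmbedding ∈ E₂

/-- Two vertices are adjacent if some edge contains both. -/
def Adjacent {n : ℕ} (E : Finset (Finset (Fin n))) (u v : Fin n) : Prop :=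
  u ≠ v ∧ ∃ e ∈ E, u ∈ e ∧ v ∈ e

/-- The link of a vertex `v`: all 2-element sets `S` with `S ∪ {v} ∈ E`. -/
def link {n : ℕ} (E : Finset (Finset (Fin n))) (v : Fin n) : Finset (Finset (Fin n)) :=
  (E.filter fun e => v ∈ e).image fun e => e.erase v

/-- The degree of a vertex: the size of its link. -/
def degree {n : ℕ} (E : Finset (Finset (Fin n))) (v : Fin n) : ℕ := (link E v).card

/-- The transfer `T_v^u(G)`: delete all edges containing `v` and replace `v` for `u`
in all edges containing `u` but not `v`. -/
def transfer {n : ℕ} (E : Finset (Finset (Fin n))) (u v : Fin n) : Finset (Finset (Fin n)) :=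
  (E.filter fun e => v ∉ e) ∪
    ((E.filter fun e => u ∈ e ∧ v ∉ e).image fun e => insert v (e.erase u))

/-- A 3-graph is complete 3-partite: there is a partition of the vertices into three classes
such that the edges are exactly the triples with one vertex in each class. -/
def IsComplete3Partite {n : ℕ} (E : Finset (Finset (Fin n))) : Prop :=
  ∃ P : Fin n → Fin 3,
    ∀ e : Finset (Fin n), e ∈ E ↔ ∀ k : Fin 3, (e.filter fun i => P i = k).card = 1

/-- `G` has maximum `p`-spectral radius among all cancellative 3-graphs on `n` vertices. -/
def MaxSpectral {n : ℕ} (p : ℝ) (E : Finset (Finset (Fin n))) : Prop :=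
  IsThreeGraph E ∧ Cancellative E ∧
    ∀ E' : Finset (Finset (Fin n)), IsThreeGraph E' → Cancellative E' →
      specRad p E' ≤ specRad p E


/-! ### Auxiliary development for the proof -/

namespace SpecAux
variable {n : ℕ}

noncomputable def fE (E : Finset (Finset (Fin n))) (y : Fin n → ℝ) : ℝ :=
  ∑ e ∈ E, ∏ i ∈ e, y i

/-- shift: move `δ` of weight from `v` to `u`. -/
def sh (y : Fin n → ℝ) (u v : Fin n) (δ : ℝ) : Fin n → ℝ :=
  fun i => if i = u then y u + δ else if i = v then y v - δ else y i

lemma sh_zero (y : Fin n → ℝ) (u v : Fin n) : sh y u v 0 = y := by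
  funext i; simp only [sh]; split_ifs with h1 h2 <;> simp [h1] <;> simp [h2]

lemma sh_apply_ne (y : Fin n → ℝ) {u v i : Fin n} (δ : ℝ) (h1 : i ≠ u) (h2 : i ≠ v) :
    sh y u v δ i = y i := by simp [sh, h1, h2]

lemma sum_sh (y : Fin n → ℝ) {u v : Fin n} (huv : u ≠ v) (δ : ℝ) :
    ∑ i, sh y u v δ i = ∑ i, y i := by
  classical
  have key : ∀ i, sh y u v δ i = y i + (if i = u then δ else 0) - (if i = v then δ else 0) := by
    intro i
    by_cases h1 : i = u
    · subst h1; simp [sh, huv]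
    · by_cases h2 : i = v
      · subst h2; simp [sh, h1]
      · simp [sh, h1, h2]
  simp only [key, Finset.sum_sub_distrib, Finset.sum_add_distrib, Finset.sum_ite_eq',
    Finset.mem_univ, if_true]
  ring

section Quantities
variable (E : Finset (Finset (Fin n))) (y : Fin n → ℝ)

/-- Sum over edges containing `u` but not `v` of the product over `e.erase u`. -/
noncomputable def SA (u v : Fin n) : ℝ :=
  ∑ e ∈ E.filter (fun e => u ∈ e ∧ ¬ v ∈ e), ∏ i ∈ e.erase u, y i

/-- Sum over edges containing neither `u` nor `v`. -/
noncomputable def SC (u v : Fin n) : ℝ :=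
  ∑ e ∈ E.filter (fun e => ¬ u ∈ e ∧ ¬ v ∈ e), ∏ i ∈ e, y i

/-- Sum over edges containing both `u` and `v`. -/
noncomputable def SJ (u v : Fin n) : ℝ :=
  ∑ e ∈ E.filter (fun e => u ∈ e ∧ v ∈ e), ∏ i ∈ (e.erase u).erase v, y i

/-- The "link value" of a vertex. -/
noncomputable def LE (v : Fin n) : ℝ :=
  ∑ e ∈ E.filter (fun e => v ∈ e), ∏ i ∈ e.erase v, y i

end Quantities

lemma SC_symm (E : Finset (Finset (Fin n))) (y : Fin n → ℝ) (u v : Fin n) :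
    SC E y u v = SC E y v u := by
  unfold SC
  apply Finset.sum_congr _ (fun _ _ => rfl)
  apply Finset.filter_congr
  intro e _
  tauto

lemma SJ_symm (E : Finset (Finset (Fin n))) (y : Fin n → ℝ) (u v : Fin n) :
    SJ E y u v = SJ E y v u := by
  unfold SJ
  rw [Finset.filter_congr (fun e (_ : e ∈ E) => by tauto :
    ∀ e ∈ E, (u ∈ e ∧ v ∈ e) ↔ (v ∈ e ∧ u ∈ e))]
  apply Finset.sum_congr rfl
  intro e _
  rw [Finset.erase_right_comm]

lemma SJ_nonneg (E : Finset (Finset (Fin n))) (y : Fin n → ℝ) (hy : ∀ i, 0 ≤ y i) (u v : Fin n) :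
    0 ≤ SJ E y u v := by
  apply Finset.sum_nonneg
  intro e _
  exact Finset.prod_nonneg (fun i _ => hy i)

lemma fE_sh (E : Finset (Finset (Fin n))) (y : Fin n → ℝ) {u v : Fin n} (huv : u ≠ v) (δ : ℝ) :
    fE E (sh y u v δ) =
      SC E y u v + (y u + δ) * SA E y u v + (y v - δ) * SA E y v u
      + (y u + δ) * ((y v - δ) * SJ E y u v) := by
  classical
  have shu : sh y u v δ u = y u + δ := by simp [sh]
  have shv : sh y u v δ v = y v - δ := by simp [sh, huv.symm]
  have Hboth : ∑ e ∈ E.filter (fun e => u ∈ e ∧ v ∈ e), ∏ i ∈ e, sh y u v δ i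
      = (y u + δ) * ((y v - δ) * SJ E y u v) := by
    rw [SJ, Finset.mul_sum, Finset.mul_sum]
    apply Finset.sum_congr rfl
    intro e he
    obtain ⟨-, hu, hv⟩ := Finset.mem_filter.1 he
    rw [← Finset.mul_prod_erase e _ hu, shu]
    have hv' : v ∈ e.erase u := Finset.mem_erase.2 ⟨huv.symm, hv⟩
    rw [← Finset.mul_prod_erase _ _ hv', shv]
    congr 1
    congr 1
    apply Finset.prod_congr rfl
    intro i hi
    obtain ⟨hiv, hi2⟩ := Finset.mem_erase.1 hi
    exact sh_apply_ne y δ (Finset.mem_erase.1 hi2).1 hiv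
  have HA : ∑ e ∈ E.filter (fun e => u ∈ e ∧ ¬ v ∈ e), ∏ i ∈ e, sh y u v δ i
      = (y u + δ) * SA E y u v := by
    rw [SA, Finset.mul_sum]
    apply Finset.sum_congr rfl
    intro e he
    obtain ⟨-, hu, hv⟩ := Finset.mem_filter.1 he
    rw [← Finset.mul_prod_erase e _ hu, shu]
    congr 1
    apply Finset.prod_congr rfl
    intro i hi
    obtain ⟨hiu, hie⟩ := Finset.mem_erase.1 hi
    exact sh_apply_ne y δ hiu (fun h => hv (h ▸ hie))
  have HB : ∑ e ∈ E.filter (fun e => ¬ u ∈ e ∧ v ∈ e), ∏ i ∈ e, sh y u v δ i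
      = (y v - δ) * SA E y v u := by
    rw [SA, Finset.mul_sum,
      Finset.filter_congr (fun e (_ : e ∈ E) => by tauto :
        ∀ e ∈ E, (¬ u ∈ e ∧ v ∈ e) ↔ (v ∈ e ∧ ¬ u ∈ e))]
    apply Finset.sum_congr rfl
    intro e he
    obtain ⟨-, hv, hu⟩ := Finset.mem_filter.1 he
    rw [← Finset.mul_prod_erase e _ hv, shv]
    congr 1
    apply Finset.prod_congr rfl
    intro i hi
    obtain ⟨hiv, hie⟩ := Finset.mem_erase.1 hi
    exact sh_apply_ne y δ (fun h => hu (h ▸ hie)) hiv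
  have HC : ∑ e ∈ E.filter (fun e => ¬ u ∈ e ∧ ¬ v ∈ e), ∏ i ∈ e, sh y u v δ i
      = SC E y u v := by
    rw [SC]
    apply Finset.sum_congr rfl
    intro e he
    obtain ⟨-, hu, hv⟩ := Finset.mem_filter.1 he
    apply Finset.prod_congr rfl
    intro i hi
    exact sh_apply_ne y δ (fun h => hu (h ▸ hi)) (fun h => hv (h ▸ hi))
  have split : fE E (sh y u v δ) =
      (∑ e ∈ E.filter (fun e => u ∈ e ∧ v ∈ e), ∏ i ∈ e, sh y u v δ i)
      + (∑ e ∈ E.filter (fun e => u ∈ e ∧ ¬ v ∈ e), ∏ i ∈ e, sh y u v δ i)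
      + ((∑ e ∈ E.filter (fun e => ¬ u ∈ e ∧ v ∈ e), ∏ i ∈ e, sh y u v δ i)
      + (∑ e ∈ E.filter (fun e => ¬ u ∈ e ∧ ¬ v ∈ e), ∏ i ∈ e, sh y u v δ i)) := by
    rw [fE, ← Finset.sum_filter_add_sum_filter_not E (fun e => u ∈ e),
      ← Finset.sum_filter_add_sum_filter_not (E.filter (fun e => u ∈ e)) (fun e => v ∈ e),
      ← Finset.sum_filter_add_sum_filter_not (E.filter (fun e => ¬ u ∈ e)) (fun e => v ∈ e),
      Finset.filter_filter, Finset.filter_filter, Finset.filter_filter, Finset.filter_filter]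
  rw [split, Hboth, HA, HB, HC]
  ring

lemma LE_eq (E : Finset (Finset (Fin n))) (y : Fin n → ℝ) {u v : Fin n} (huv : u ≠ v) :
    LE E y u = SA E y u v + y v * SJ E y u v := by
  classical
  rw [LE, ← Finset.sum_filter_add_sum_filter_not (E.filter (fun e => u ∈ e)) (fun e => v ∈ e),
    Finset.filter_filter, Finset.filter_filter]
  have h1 : ∑ e ∈ E.filter (fun e => u ∈ e ∧ v ∈ e), ∏ i ∈ e.erase u, y i
      = y v * SJ E y u v := by
    rw [SJ, Finset.mul_sum]
    apply Finset.sum_congr rfl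
    intro e he
    obtain ⟨-, hu, hv⟩ := Finset.mem_filter.1 he
    have hv' : v ∈ e.erase u := Finset.mem_erase.2 ⟨huv.symm, hv⟩
    rw [← Finset.mul_prod_erase _ _ hv']
  rw [h1, SA]
  ring

end SpecAux

namespace SpecAux

theorem keyBound {n : ℕ} (E : Finset (Finset (Fin n)))
    (hE : IsThreeGraph E) (hC : Cancellative E) (y₀ : Fin n → ℝ)
    (h00 : ∀ i, 0 ≤ y₀ i) (h01 : ∑ i, y₀ i = 1) : fE E y₀ ≤ 1 / 27 := by
  classical
  have hy₀K : y₀ ∈ stdSimplex ℝ (Fin n) := ⟨h00, h01⟩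
  have hfc : ContinuousOn (fE E) (stdSimplex ℝ (Fin n)) := by
    apply Continuous.continuousOn
    exact continuous_finset_sum _
      (fun e _ => continuous_finset_prod _ (fun i _ => continuous_apply i))
  obtain ⟨z, hzK, hzmax⟩ := (isCompact_stdSimplex ℝ (Fin n)).exists_isMaxOn ⟨y₀, hy₀K⟩ hfc
  set S : Set ℕ := {k | ∃ w, w ∈ stdSimplex ℝ (Fin n) ∧ IsMaxOn (fE E) (stdSimplex ℝ (Fin n)) w ∧
      (Finset.univ.filter (fun i => w i ≠ 0)).card = k} with hS
  have hSne : S.Nonempty := ⟨_, z, hzK, hzmax, rfl⟩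
  obtain ⟨y, hyK, hymax, hycard⟩ := Nat.sInf_mem hSne
  have hle : fE E y₀ ≤ fE E y := hymax hy₀K
  suffices h : fE E y ≤ 1/27 by linarith
  set T : Finset (Fin n) := Finset.univ.filter (fun i => y i ≠ 0) with hTdef
  have hmemT : ∀ i, i ∈ T ↔ y i ≠ 0 := by intro i; simp [hTdef]
  have hy0 : ∀ i, 0 ≤ y i := hyK.1
  have hysum : (∑ i, y i) = 1 := hyK.2
  have hTsum : ∑ i ∈ T, y i = 1 := by
    rw [hTdef, Finset.sum_filter_ne_zero]; exact hysum
  rcases le_or_gt (fE E y) 0 with hneg | hpos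
  · linarith
  have hex : ∃ e₀ ∈ E, (∏ i ∈ e₀, y i) ≠ 0 := by
    by_contra hcon
    push_neg at hcon
    have : fE E y = 0 := Finset.sum_eq_zero hcon
    linarith
  obtain ⟨e₀, he₀E, he₀⟩ := hex
  have he₀T : e₀ ⊆ T := by
    intro i hi
    rw [hmemT]
    intro hzero
    exact he₀ (Finset.prod_eq_zero hi hzero)
  have ht3 : 3 ≤ T.card := by
    rw [← hE e₀ he₀E]; exact Finset.card_le_card he₀T
  -- minimal-support contradiction helper
  have minsupp : ∀ u v : Fin n, u ∈ T → v ∈ T → u ≠ v →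
      fE E y ≤ fE E (sh y u v (y v)) → False := by
    intro u v huT hvT huv hge
    have hz'K : sh y u v (y v) ∈ stdSimplex ℝ (Fin n) := by
      constructor
      · intro i
        by_cases h1 : i = u
        · rw [h1]
          have huu : sh y u v (y v) u = y u + y v := by simp [sh]
          rw [huu]; exact add_nonneg (hy0 u) (hy0 v)
        · by_cases h2 : i = v
          · rw [h2]
            have hvv : sh y u v (y v) v = y v - y v := by simp [sh, Ne.symm huv]
            rw [hvv]; simp
          · rw [sh_apply_ne y _ h1 h2]; exact hy0 i
      · rw [sum_sh y huv]; exact hysum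
    have hz'max : IsMaxOn (fE E) (stdSimplex ℝ (Fin n)) (sh y u v (y v)) := by
      intro w hw
      exact le_trans (hymax hw) hge
    have hsub : Finset.univ.filter (fun i => sh y u v (y v) i ≠ 0) ⊆ T.erase v := by
      intro i hi
      rw [Finset.mem_filter] at hi
      rw [Finset.mem_erase]
      by_cases h1 : i = u
      · rw [h1]; exact ⟨huv, huT⟩
      · by_cases h2 : i = v
        · exfalso
          apply hi.2
          rw [h2]
          simp [sh, Ne.symm huv]
        · refine ⟨h2, ?_⟩
          rw [hmemT]
          rw [sh_apply_ne y _ h1 h2] at hi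
          exact hi.2
    have hcards : (Finset.univ.filter (fun i => sh y u v (y v) i ≠ 0)).card < T.card :=
      lt_of_le_of_lt (Finset.card_le_card hsub) (Finset.card_erase_lt_of_mem hvT)
    have hin : sInf S ≤ (Finset.univ.filter (fun i => sh y u v (y v) i ≠ 0)).card :=
      Nat.sInf_le ⟨sh y u v (y v), hz'K, hz'max, rfl⟩
    omega
  -- every pair of support vertices is covered by an edge inside the support
  have cover : ∀ u v : Fin n, u ∈ T → v ∈ T → u ≠ v →
      ∃ e ∈ E, e ⊆ T ∧ u ∈ e ∧ v ∈ e := by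
    intro u v huT hvT huv
    by_contra hcon
    push_neg at hcon
    have hJuv : SJ E y u v = 0 := by
      apply Finset.sum_eq_zero
      intro e he
      obtain ⟨heE, hu, hv⟩ := Finset.mem_filter.1 he
      have hnsub : ¬ e ⊆ T := fun hsubT => (hcon e heE hsubT hu) hv
      obtain ⟨w, hwe, hwT⟩ := Finset.not_subset.1 hnsub
      have hyw : y w = 0 := by
        by_contra hh; exact hwT ((hmemT w).2 hh)
      have hwu : w ≠ u := fun hh => hwT (hh ▸ huT)
      have hwv : w ≠ v := fun hh => hwT (hh ▸ hvT)
      exact Finset.prod_eq_zero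
        (Finset.mem_erase.2 ⟨hwv, Finset.mem_erase.2 ⟨hwu, hwe⟩⟩) hyw
    have e0 := fE_sh E y huv 0
    rw [sh_zero] at e0
    rcases le_total (SA E y v u) (SA E y u v) with hAB | hAB
    · apply minsupp u v huT hvT huv
      rw [fE_sh E y huv (y v), e0, hJuv]
      nlinarith [mul_le_mul_of_nonneg_left hAB (hy0 v)]
    · apply minsupp v u hvT huT huv.symm
      rw [fE_sh E y huv.symm (y u), e0, hJuv, SC_symm E y v u]
      nlinarith [mul_le_mul_of_nonneg_left hAB (hy0 u)]
  -- the third vertex of an edge through two given vertices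
  have third : ∀ e ∈ E, ∀ a b : Fin n, a ∈ e → b ∈ e → a ≠ b →
      ∃ w, w ∈ e ∧ w ≠ a ∧ w ≠ b ∧ e = {a, b, w} := by
    intro e heE a b ha hb hab
    have hcard := hE e heE
    have hb' : b ∈ e.erase a := Finset.mem_erase.2 ⟨hab.symm, hb⟩
    have h1 : ((e.erase a).erase b).card = 1 := by
      rw [Finset.card_erase_of_mem hb', Finset.card_erase_of_mem ha, hcard]
    obtain ⟨w, hw⟩ := Finset.card_eq_one.1 h1
    have hwmem : w ∈ (e.erase a).erase b := hw ▸ Finset.mem_singleton_self w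
    obtain ⟨hwb, hw2⟩ := Finset.mem_erase.1 hwmem
    obtain ⟨hwa, hwe⟩ := Finset.mem_erase.1 hw2
    refine ⟨w, hwe, hwa, hwb, ?_⟩
    have hsub : ({a, b, w} : Finset (Fin n)) ⊆ e := by
      intro x hx
      simp only [Finset.mem_insert, Finset.mem_singleton] at hx
      rcases hx with h|h|h <;> subst h <;> assumption
    have hcard' : ({a, b, w} : Finset (Fin n)).card = 3 := by
      rw [Finset.card_insert_of_notMem (by simp [hab, Ne.symm hwa]),
        Finset.card_insert_of_notMem (by simp [Ne.symm hwb]), Finset.card_singleton]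
    exact (Finset.eq_of_subset_of_card_le hsub (by rw [hcard, hcard'])).symm
  -- uniqueness of the covering edge
  have unique : ∀ u v : Fin n, u ∈ T → v ∈ T → u ≠ v →
      ∀ e ∈ E, ∀ e' ∈ E, e ⊆ T → e' ⊆ T → u ∈ e → v ∈ e → u ∈ e' → v ∈ e' → e = e' := by
    intro u v huT hvT huv e heE e' he'E heT he'T hue hve hue' hve'
    obtain ⟨w, hwe, hwu, hwv, hew⟩ := third e heE u v hue hve huv
    obtain ⟨w', hwe', hwu', hwv', hew'⟩ := third e' he'E u v hue' hve' huv
    by_cases hww : w = w'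
    · rw [hew, hew', hww]
    · exfalso
      have hwT : w ∈ T := heT hwe
      have hw'T : w' ∈ T := he'T hwe'
      obtain ⟨A, hAE, hAT, hwA, hw'A⟩ := cover w w' hwT hw'T hww
      have hee' : e ≠ e' := by
        intro h
        apply hww
        have hmem : w' ∈ e := h ▸ hwe'
        rw [hew] at hmem
        simp only [Finset.mem_insert, Finset.mem_singleton] at hmem
        rcases hmem with h1|h1|h1
        · exact absurd h1 hwu'
        · exact absurd h1 hwv'
        · exact h1.symm
      have hsd : symmDiff e e' ⊆ A := by
        intro x hx
        rw [Finset.mem_symmDiff] at hx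
        rcases hx with ⟨hxe, hxe'⟩ | ⟨hxe', hxe⟩
        · rw [hew] at hxe
          simp only [Finset.mem_insert, Finset.mem_singleton] at hxe
          rcases hxe with h1|h1|h1
          · exact absurd (by rw [h1]; exact hue') hxe'
          · exact absurd (by rw [h1]; exact hve') hxe'
          · rw [h1]; exact hwA
        · rw [hew'] at hxe'
          simp only [Finset.mem_insert, Finset.mem_singleton] at hxe'
          rcases hxe' with h1|h1|h1
          · exact absurd (by rw [h1]; exact hue) hxe
          · exact absurd (by rw [h1]; exact hve) hxe
          · rw [h1]; exact hw'A
      have hAe : A ≠ e := by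
        intro h
        have hmem : w' ∈ e := h ▸ hw'A
        rw [hew] at hmem
        simp only [Finset.mem_insert, Finset.mem_singleton] at hmem
        rcases hmem with h1|h1|h1
        · exact hwu' h1
        · exact hwv' h1
        · exact hww h1.symm
      have hAe' : A ≠ e' := by
        intro h
        have hmem : w ∈ e' := h ▸ hwA
        rw [hew'] at hmem
        simp only [Finset.mem_insert, Finset.mem_singleton] at hmem
        rcases hmem with h1|h1|h1
        · exact hwu h1
        · exact hwv h1
        · exact hww h1
      exact hC A hAE e heE e' he'E hAe hAe' hee' hsd
  -- Lagrange condition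
  have lag_le : ∀ u v : Fin n, u ∈ T → v ∈ T → u ≠ v → LE E y u ≤ LE E y v := by
    intro u v huT hvT huv
    by_contra hlt
    push_neg at hlt
    have hεpos : 0 < LE E y u - LE E y v := by linarith
    have hJ0 : 0 ≤ SJ E y u v := SJ_nonneg E y hy0 u v
    have hyv : 0 < y v := lt_of_le_of_ne (hy0 v) (Ne.symm ((hmemT v).1 hvT))
    set δ := min (y v) ((LE E y u - LE E y v) / (2 * SJ E y u v + 2)) with hδdef
    have hδpos : 0 < δ := lt_min hyv (by positivity)
    have hδv : δ ≤ y v := min_le_left _ _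
    have hδJ : δ * SJ E y u v < LE E y u - LE E y v := by
      have h2 : δ ≤ (LE E y u - LE E y v) / (2 * SJ E y u v + 2) := min_le_right _ _
      have h3 : (0:ℝ) < 2 * SJ E y u v + 2 := by linarith
      have h4 : δ * (2 * SJ E y u v + 2) ≤ LE E y u - LE E y v := by
        rw [← div_mul_cancel₀ (LE E y u - LE E y v) (ne_of_gt h3)]
        exact mul_le_mul_of_nonneg_right h2 (le_of_lt h3)
      nlinarith
    have hz'K : sh y u v δ ∈ stdSimplex ℝ (Fin n) := by
      constructor
      · intro i
        by_cases h1 : i = u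
        · rw [h1]
          have huu : sh y u v δ u = y u + δ := by simp [sh]
          rw [huu]; linarith [hy0 u]
        · by_cases h2 : i = v
          · rw [h2]
            have hvv : sh y u v δ v = y v - δ := by simp [sh, Ne.symm huv]
            rw [hvv]; linarith
          · rw [sh_apply_ne y _ h1 h2]; exact hy0 i
      · rw [sum_sh y huv]; exact hysum
    have hmax := hymax hz'K
    have e0 := fE_sh E y huv 0
    rw [sh_zero] at e0
    have key : fE E (sh y u v δ) - fE E y
        = δ * ((LE E y u - LE E y v) - δ * SJ E y u v) := by
      rw [fE_sh E y huv δ, e0, LE_eq E y huv, LE_eq E y huv.symm, ← SJ_symm E y u v]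
      ring
    have hposd : 0 < δ * ((LE E y u - LE E y v) - δ * SJ E y u v) :=
      mul_pos hδpos (by linarith)
    have : fE E (sh y u v δ) ≤ fE E y := hmax
    linarith
  have lag : ∀ u v : Fin n, u ∈ T → v ∈ T → LE E y u = LE E y v := by
    intro u v hu hv
    rcases eq_or_ne u v with h|h
    · rw [h]
    · exact le_antisymm (lag_le u v hu hv h) (lag_le v u hv hu h.symm)
  -- restriction to edges inside the support
  set s : Finset (Finset (Fin n)) := E.filter (fun e => e ⊆ T) with hsdef
  have hmems : ∀ e, e ∈ s ↔ e ∈ E ∧ e ⊆ T := by intro e; simp [hsdef]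
  have hfs : fE E y = ∑ e ∈ s, ∏ i ∈ e, y i := by
    rw [fE]
    symm
    apply Finset.sum_subset (Finset.filter_subset _ _)
    intro e heE hes
    have hnsub : ¬ e ⊆ T := fun hsubT => hes ((hmems e).2 ⟨heE, hsubT⟩)
    obtain ⟨w, hwe, hwT⟩ := Finset.not_subset.1 hnsub
    have hyw : y w = 0 := by by_contra hh; exact hwT ((hmemT w).2 hh)
    exact Finset.prod_eq_zero hwe hyw
  have hLEpad : ∀ v ∈ T, LE E y v = ∑ e ∈ s.filter (fun e => v ∈ e), ∏ i ∈ e.erase v, y i := by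
    intro v hvT
    rw [LE]
    symm
    apply Finset.sum_subset
    · intro e he
      obtain ⟨hes, hve⟩ := Finset.mem_filter.1 he
      exact Finset.mem_filter.2 ⟨((hmems e).1 hes).1, hve⟩
    · intro e heE hens
      obtain ⟨heE', hve⟩ := Finset.mem_filter.1 heE
      have hnsub : ¬ e ⊆ T := fun hsubT =>
        hens (Finset.mem_filter.2 ⟨(hmems e).2 ⟨heE', hsubT⟩, hve⟩)
      obtain ⟨w, hwe, hwT⟩ := Finset.not_subset.1 hnsub
      have hyw : y w = 0 := by by_contra hh; exact hwT ((hmemT w).2 hh)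
      have hwv : w ≠ v := fun hh => hwT (hh ▸ hvT)
      exact Finset.prod_eq_zero (Finset.mem_erase.2 ⟨hwv, hwe⟩) hyw
  have swap : ∀ g : Finset (Fin n) → Fin n → ℝ,
      ∑ v ∈ T, ∑ e ∈ s.filter (fun e => v ∈ e), g e v = ∑ e ∈ s, ∑ v ∈ e, g e v := by
    intro g
    have h1 : ∀ v : Fin n, ∑ e ∈ s.filter (fun e => v ∈ e), g e v
        = ∑ e ∈ s, if v ∈ e then g e v else 0 := fun v => Finset.sum_filter _ _
    simp only [h1]
    rw [Finset.sum_comm]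
    apply Finset.sum_congr rfl
    intro e hes
    have heT : e ⊆ T := ((hmems e).1 hes).2
    rw [← Finset.sum_filter]
    apply Finset.sum_congr _ (fun _ _ => rfl)
    rw [Finset.filter_mem_eq_inter]
    exact Finset.inter_eq_right.2 heT
  have hI1 : ∑ v ∈ T, y v * LE E y v = 3 * fE E y := by
    have step1 : ∑ v ∈ T, y v * LE E y v
        = ∑ v ∈ T, ∑ e ∈ s.filter (fun e => v ∈ e), y v * ∏ i ∈ e.erase v, y i := by
      apply Finset.sum_congr rfl
      intro v hvT
      rw [hLEpad v hvT, Finset.mul_sum]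
    rw [step1, swap (fun e v => y v * ∏ i ∈ e.erase v, y i), hfs, Finset.mul_sum]
    apply Finset.sum_congr rfl
    intro e hes
    obtain ⟨heE, heT⟩ := (hmems e).1 hes
    have hstep : ∀ v ∈ e, y v * ∏ i ∈ e.erase v, y i = ∏ i ∈ e, y i :=
      fun v hv => Finset.mul_prod_erase e y hv
    rw [Finset.sum_congr rfl hstep, Finset.sum_const, hE e heE, nsmul_eq_mul]
    push_cast
    ring
  have hPart : ∀ v ∈ T, ∑ e ∈ s.filter (fun e => v ∈ e), (∑ u ∈ e.erase v, y u) = 1 - y v := by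
    intro v hvT
    have hstep : ∑ e ∈ s.filter (fun e => v ∈ e), (∑ u ∈ e.erase v, y u)
        = ∑ u ∈ T.erase v, y u := by
      rw [← Finset.sum_sigma (s.filter (fun e => v ∈ e)) (fun e => e.erase v)
        (fun x => y x.2)]
      apply Finset.sum_nbij (fun x => x.2)
      · rintro ⟨e, u⟩ hx
        obtain ⟨he, hu⟩ := Finset.mem_sigma.1 hx
        obtain ⟨hes, hve⟩ := Finset.mem_filter.1 he
        obtain ⟨heE, heT⟩ := (hmems e).1 hes
        obtain ⟨huv, hue⟩ := Finset.mem_erase.1 hu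
        exact Finset.mem_erase.2 ⟨huv, heT hue⟩
      · rintro ⟨e, u⟩ hx ⟨e', u'⟩ hx' hequ
        rw [Finset.mem_coe] at hx hx'
        obtain ⟨he, hu⟩ := Finset.mem_sigma.1 hx
        obtain ⟨he', hu'⟩ := Finset.mem_sigma.1 hx'
        obtain ⟨hes, hve⟩ := Finset.mem_filter.1 he
        obtain ⟨hes', hve'⟩ := Finset.mem_filter.1 he'
        obtain ⟨heE, heT⟩ := (hmems e).1 hes
        obtain ⟨heE', heT'⟩ := (hmems e').1 hes'
        obtain ⟨huv, hue⟩ := Finset.mem_erase.1 hu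
        obtain ⟨huv', hue'⟩ := Finset.mem_erase.1 hu'
        have hequ' : u = u' := hequ
        subst hequ'
        have hee : e = e' := unique v u hvT (heT hue) (Ne.symm huv) e heE e' heE'
          heT heT' hve hue hve' hue'
        subst hee
        rfl
      · intro x hx
        rw [Finset.mem_coe, Finset.mem_erase] at hx
        obtain ⟨hxv, hxT⟩ := hx
        obtain ⟨e, heE, heT, hve, hxe⟩ := cover v x hvT hxT (Ne.symm hxv)
        refine ⟨⟨e, x⟩, ?_, rfl⟩
        rw [Finset.mem_coe, Finset.mem_sigma]
        exact ⟨Finset.mem_filter.2 ⟨(hmems e).2 ⟨heE, heT⟩, hve⟩,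
          Finset.mem_erase.2 ⟨hxv, hxe⟩⟩
      · rintro ⟨e, u⟩ hx; rfl
    rw [hstep, Finset.sum_erase_eq_sub hvT, hTsum]
  have hPE : ∀ e ∈ s, ∑ v ∈ e, y v * (∑ u ∈ e.erase v, y u)
      = 2 * ∑ v ∈ e, ∏ i ∈ e.erase v, y i := by
    intro e hes
    obtain ⟨heE, heT⟩ := (hmems e).1 hes
    obtain ⟨a, b, c, hab, hac, hbc, rfl⟩ := Finset.card_eq_three.1 (hE e heE)
    have h1 : ({a, b, c} : Finset (Fin n)).erase a = {b, c} := by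
      rw [Finset.erase_insert (by simp [hab, hac])]
    have h2 : ({a, b, c} : Finset (Fin n)).erase b = {a, c} := by
      rw [show ({a, b, c} : Finset (Fin n)) = insert b {a, c} from by
        ext x; simp only [Finset.mem_insert, Finset.mem_singleton]; tauto,
        Finset.erase_insert (by simp [Ne.symm hab, hbc])]
    have h3 : ({a, b, c} : Finset (Fin n)).erase c = {a, b} := by
      rw [show ({a, b, c} : Finset (Fin n)) = insert c {a, b} from by
        ext x; simp only [Finset.mem_insert, Finset.mem_singleton]; tauto,
        Finset.erase_insert (by simp [Ne.symm hac, Ne.symm hbc])]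
    have hna : a ∉ ({b, c} : Finset (Fin n)) := by simp [hab, hac]
    have hnb : b ∉ ({c} : Finset (Fin n)) := by simp [hbc]
    have hna' : a ∉ ({c} : Finset (Fin n)) := by simp [hac]
    have hna'' : a ∉ ({b} : Finset (Fin n)) := by simp [hab]
    rw [Finset.sum_insert hna, Finset.sum_insert hnb, Finset.sum_singleton,
      Finset.sum_insert hna, Finset.sum_insert hnb, Finset.sum_singleton,
      h1, h2, h3,
      Finset.sum_insert hnb, Finset.sum_singleton,
      Finset.sum_insert hna', Finset.sum_singleton,
      Finset.sum_insert hna'', Finset.sum_singleton,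
      Finset.prod_insert hnb, Finset.prod_singleton,
      Finset.prod_insert hna', Finset.prod_singleton,
      Finset.prod_insert hna'', Finset.prod_singleton]
    ring
  have hE1 : ∑ v ∈ T, y v * (1 - y v) = 2 * ∑ v ∈ T, LE E y v := by
    have lhs : ∑ v ∈ T, y v * (1 - y v)
        = ∑ v ∈ T, ∑ e ∈ s.filter (fun e => v ∈ e), y v * (∑ u ∈ e.erase v, y u) := by
      apply Finset.sum_congr rfl
      intro v hvT
      rw [← Finset.mul_sum, hPart v hvT]
    have rhs : ∑ v ∈ T, LE E y v = ∑ e ∈ s, ∑ v ∈ e, ∏ i ∈ e.erase v, y i := by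
      rw [← swap (fun e v => ∏ i ∈ e.erase v, y i)]
      exact Finset.sum_congr rfl (fun v hv => hLEpad v hv)
    rw [lhs, swap (fun e v => y v * (∑ u ∈ e.erase v, y u)), rhs, Finset.mul_sum]
    exact Finset.sum_congr rfl hPE
  have hLEconst : ∀ v ∈ T, LE E y v = 3 * fE E y := by
    intro v hvT
    have h1 : ∑ w ∈ T, y w * LE E y w = ∑ w ∈ T, y w * LE E y v :=
      Finset.sum_congr rfl (fun w hwT => by rw [lag w v hwT hvT])
    have h2 := hI1
    rw [h1, ← Finset.sum_mul, hTsum, one_mul] at h2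
    exact h2
  have hsum6 : 1 - ∑ v ∈ T, (y v)^2 = 6 * (T.card : ℝ) * fE E y := by
    have l1 : ∑ v ∈ T, y v * (1 - y v) = 1 - ∑ v ∈ T, (y v)^2 := by
      have hh : ∀ v ∈ T, y v * (1 - y v) = y v - (y v)^2 := fun v _ => by ring
      rw [Finset.sum_congr rfl hh, Finset.sum_sub_distrib, hTsum]
    have l2 : ∑ v ∈ T, LE E y v = (T.card : ℝ) * (3 * fE E y) := by
      rw [Finset.sum_congr rfl hLEconst, Finset.sum_const, nsmul_eq_mul]
    rw [← l1, hE1, l2]; ring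
  have hQ : (1:ℝ) ≤ (T.card : ℝ) * ∑ v ∈ T, (y v)^2 := by
    have hh := sq_sum_le_card_mul_sum_sq (s := T) (f := y)
    rw [hTsum] at hh
    simpa using hh
  have htR : (3:ℝ) ≤ (T.card : ℝ) := by exact_mod_cast ht3
  have htpos : (0:ℝ) < (T.card:ℝ) := by linarith
  have h7 := congrArg (fun r => (T.card:ℝ) * r) hsum6
  have h6 : 6*(T.card:ℝ)*(T.card:ℝ)*fE E y ≤ (T.card:ℝ) - 1 := by nlinarith [h7, hQ]
  nlinarith [h6, htR, hpos, mul_pos htpos htpos,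
    mul_nonneg (by linarith : (0:ℝ) ≤ 2*(T.card:ℝ) - 3) (by linarith : (0:ℝ) ≤ (T.card:ℝ) - 3)]

end SpecAux

/-- For a cancellative 3-graph with at least one edge, `λ^(1)(G) = 1/9`. -/
theorem specRad_one_eq_ninth {n : ℕ} (E : Finset (Finset (Fin n)))
    (hE : IsThreeGraph E) (hC : Cancellative E) (hne : E.Nonempty) :
    specRad 1 E = 1 / 9 := by
  classical
  obtain ⟨e₀, he₀⟩ := hne
  have hcard := hE e₀ he₀
  have habs : ∀ x : Fin n → ℝ, pNorm 1 x = 1 → ∑ i, |x i| = 1 := by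
    intro x hx
    rw [pNorm] at hx
    have h11 : (1:ℝ)/1 = 1 := by norm_num
    rw [h11, Real.rpow_one] at hx
    simpa [Real.rpow_one] using hx
  have hub : ∀ r ∈ {r : ℝ | ∃ x : Fin n → ℝ, pNorm 1 x = 1 ∧ polyForm E x = r}, r ≤ 1/9 := by
    rintro r ⟨x, hx1, rfl⟩
    have hsum := habs x hx1
    have hkey := SpecAux.keyBound E hE hC (fun i => |x i|) (fun i => abs_nonneg _) hsum
    simp only [SpecAux.fE] at hkey
    have hcmp : (∑ e ∈ E, ∏ i ∈ e, x i) ≤ ∑ e ∈ E, ∏ i ∈ e, |x i| := by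
      apply Finset.sum_le_sum
      intro e he
      calc ∏ i ∈ e, x i ≤ |∏ i ∈ e, x i| := le_abs_self _
        _ = ∏ i ∈ e, |x i| := Finset.abs_prod e x
    rw [polyForm]
    linarith
  have hx₀norm : pNorm 1 (fun i => if i ∈ e₀ then (1/3:ℝ) else 0) = 1 := by
    rw [pNorm]
    have h11 : (1:ℝ)/1 = 1 := by norm_num
    rw [h11, Real.rpow_one]
    have hh : ∀ i : Fin n, |(if i ∈ e₀ then (1/3:ℝ) else 0)| ^ (1:ℝ)
        = (if i ∈ e₀ then (1/3:ℝ) else 0) := by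
      intro i
      by_cases h : i ∈ e₀
      · rw [if_pos h, Real.rpow_one, abs_of_nonneg (by norm_num : (0:ℝ) ≤ 1/3)]
      · rw [if_neg h, abs_zero, Real.rpow_one]
    rw [Finset.sum_congr rfl (fun i _ => hh i), Finset.sum_ite_mem, Finset.univ_inter,
      Finset.sum_const, hcard, nsmul_eq_mul]
    norm_num
  have hx₀poly : polyForm E (fun i => if i ∈ e₀ then (1/3:ℝ) else 0) = 1/9 := by
    rw [polyForm]
    have hmain : ∑ e ∈ E, ∏ i ∈ e, (if i ∈ e₀ then (1/3:ℝ) else 0) = 1/27 := by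
      rw [Finset.sum_eq_single e₀]
      · rw [Finset.prod_congr rfl (fun i hi => if_pos hi), Finset.prod_const, hcard]
        norm_num
      · intro e heE hene
        have hnsub : ¬ e ⊆ e₀ := by
          intro hsub
          exact hene (Finset.eq_of_subset_of_card_le hsub (by rw [hE e heE, hcard]))
        obtain ⟨w, hwe, hwn⟩ := Finset.not_subset.1 hnsub
        exact Finset.prod_eq_zero hwe (if_neg hwn)
      · intro h; exact absurd he₀ h
    rw [hmain]; norm_num
  have hmem : (1/9 : ℝ) ∈ {r : ℝ | ∃ x : Fin n → ℝ, pNorm 1 x = 1 ∧ polyForm E x = r} :=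
    ⟨_, hx₀norm, hx₀poly⟩
  rw [specRad]
  apply le_antisymm
  · exact csSup_le ⟨1/9, hmem⟩ hub
  · exact le_csSup ⟨1/9, fun r hr => hub r hr⟩ hmem
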